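/- Let G = N ⋊ H be a split extension, with asynchronous combings L_N of N over X and L_H of H over Y (with constant K), and suppose that for all n ∈ N, y ∈ Y, every word in L_N representing n^y asynchronously K'-fellow travels with every 'image under y' of every word in L_N representing n. Then L_G = L_H L_N = {wv : w ∈ L_H, v ∈ L_N} is an asynchronous combing of G over X ∪ Y. If L_N and L_H are bijective, so is L_G. -/

import Mathlib

/-- The group element represented by a word. -/
def evalW {X G : Type*} [Group G] (π : X → G) (w : List X) : G := (w.map π).prod

/-- The group element represented by the length-`t` prefix of a word. -/
def evalP {X G : Type*} [Group G] (π : X → G) (w : List X) (t : ℕ) : G :=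
  ((w.take t).map π).prod

/-- `g` and `h` are at word-metric distance at most `K` (w.r.t. the generators `π x`). -/
def WDistLE {X G : Type*} [Group G] (π : X → G) (K : ℕ) (g h : G) : Prop :=
  ∃ l : List X, l.length ≤ K ∧ g * (l.map π).prod = h

/-- `v` and `w` synchronously `K`-fellow travel. -/
def SyncFT {X G : Type*} [Group G] (π : X → G) (K : ℕ) (v w : List X) : Prop :=
  ∀ t : ℕ, WDistLE π K (evalP π v t) (evalP π w t)

/-- `v` and `w` asynchronously `K`-fellow travel, via a monotone reparametrization
mapping `[0, |v|]` onto `[0, |w|]`. -/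
def AsyncFT {X G : Type*} [Group G] (π : X → G) (K : ℕ) (v w : List X) : Prop :=
  ∃ h : ℕ → ℕ, Monotone h ∧ h 0 = 0 ∧ h v.length = w.length ∧
    ∀ t : ℕ, WDistLE π K (evalP π v t) (evalP π w (h t))

/-- The generating set is inverse-closed. -/
def InvClosed {X G : Type*} [Group G] (π : X → G) : Prop :=
  ∀ x, ∃ x', π x' = (π x)⁻¹

/-- `L` is a language for `G`: it contains a representative of every element. -/
def IsLanguageFor {X G : Type*} [Group G] (π : X → G) (L : Set (List X)) : Prop :=
  ∀ g : G, ∃ w ∈ L, evalW π w = g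

/-- `L` contains exactly one representative of every element. -/
def IsBijectiveLang {X G : Type*} [Group G] (π : X → G) (L : Set (List X)) : Prop :=
  ∀ g : G, ∃! w, w ∈ L ∧ evalW π w = g

/-- The pairs of words for which a combing requires fellow travelling:
`w` represents `v`, or `v` times a generator. -/
def CombRel {X G : Type*} [Group G] (π : X → G) (v w : List X) : Prop :=
  evalW π w = evalW π v ∨ ∃ x, evalW π w = evalW π v * π x

/-- `L` is a synchronous combing with fellow traveller constant `K`. -/
def IsSyncCombing {X G : Type*} [Group G] (π : X → G) (L : Set (List X)) (K : ℕ) : Prop :=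
  IsLanguageFor π L ∧ ∀ v ∈ L, ∀ w ∈ L, CombRel π v w → SyncFT π K v w

/-- `L` is an asynchronous combing with fellow traveller constant `K`. -/
def IsAsyncCombing {X G : Type*} [Group G] (π : X → G) (L : Set (List X)) (K : ℕ) : Prop :=
  IsLanguageFor π L ∧ ∀ v ∈ L, ∀ w ∈ L, CombRel π v w → AsyncFT π K v w

/-- `u` is an image of `v` under (the action of the generator) `y`: the concatenation of
words of `L_N` representing the images of the letters of `v`. -/
def IsImageUnder {X Y N H : Type*} [Group N] [Group H] [Inhabited X]
    (πN : X → N) (πH : Y → H) (φ : H →* MulAut N) (LN : Set (List X))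
    (y : Y) (v u : List X) : Prop :=
  ∃ ws : List (List X), ws.length = v.length ∧ u = ws.flatten ∧
    ∀ i : ℕ, i < v.length →
      ws.getD i [] ∈ LN ∧ evalW πN (ws.getD i []) = φ (πH y) (πN (v.getD i default))

section Aux
variable {X G : Type*} [Group G] {π : X → G}

theorem evalW_append (a b : List X) : evalW π (a ++ b) = evalW π a * evalW π b := by
  simp [evalW]

theorem evalP_append_left {a : List X} (b : List X) {t : ℕ} (h : t ≤ a.length) :
    evalP π (a ++ b) t = evalP π a t := by
  simp [evalP, List.take_append_of_le_length h]

theorem evalP_append_right (a b : List X) (s : ℕ) :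
    evalP π (a ++ b) (a.length + s) = evalW π a * evalP π b s := by
  simp [evalP, evalW, List.take_append]
  rw [List.take_of_length_le (by simp)]

theorem evalP_of_le {w : List X} {t : ℕ} (h : w.length ≤ t) : evalP π w t = evalW π w := by
  simp [evalP, evalW, List.take_of_length_le h]

theorem evalP_succ (w : List X) (j : ℕ) (hj : j < w.length) :
    evalP π w (j + 1) = evalP π w j * π w[j] := by
  have hj' : j < (w.map π).length := by simpa using hj
  have := List.prod_take_succ (w.map π) j hj'
  simp only [evalP, List.map_take] at *
  rw [this]; congr 1; simp

theorem evalP_segment (w : List X) {q p : ℕ} (h : q ≤ p) :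
    evalP π w q * (((w.drop q).take (p - q)).map π).prod = evalP π w p := by
  have h2 : w.take p = w.take q ++ (w.drop q).take (p - q) := by
    rw [← List.take_add]; congr 1; omega
  rw [evalP, evalP, h2, List.map_append, List.prod_append]

theorem wd_refl (K : ℕ) (g : G) : WDistLE π K g g := ⟨[], by simp⟩

theorem wd_mono {K K' : ℕ} (h : K ≤ K') {a b : G} : WDistLE π K a b → WDistLE π K' a b :=
  fun ⟨l, hl, hp⟩ => ⟨l, hl.trans h, hp⟩

theorem wd_iff {K : ℕ} {a b : G} :
    WDistLE π K a b ↔ ∃ l : List X, l.length ≤ K ∧ (l.map π).prod = a⁻¹ * b := by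
  constructor <;> rintro ⟨l, hl, hp⟩
  · exact ⟨l, hl, by rw [← hp]; group⟩
  · exact ⟨l, hl, by rw [hp]; group⟩

end Aux
section Aux2
variable {X G : Type*} [Group G] {π : X → G}

theorem wd_trans {K1 K2 : ℕ} {a b c : G} (h1 : WDistLE π K1 a b) (h2 : WDistLE π K2 b c) :
    WDistLE π (K1 + K2) a c := by
  obtain ⟨l1, hl1, hp1⟩ := h1
  obtain ⟨l2, hl2, hp2⟩ := h2
  exact ⟨l1 ++ l2, by simpa using Nat.add_le_add hl1 hl2,
    by rw [List.map_append, List.prod_append, ← mul_assoc, hp1, hp2]⟩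

theorem wd_left_mul {K : ℕ} {a b : G} (c : G) (h : WDistLE π K a b) :
    WDistLE π K (c * a) (c * b) := by
  obtain ⟨l, hl, hp⟩ := h
  exact ⟨l, hl, by rw [mul_assoc, hp]⟩

theorem wd_map {X' G' : Type*} [Group G'] {π' : X' → G'} (ψ : G →* G') (f : X → X')
    (hc : ∀ x, π' (f x) = ψ (π x)) {K : ℕ} {a b : G} (h : WDistLE π K a b) :
    WDistLE π' K (ψ a) (ψ b) := by
  obtain ⟨l, hl, hp⟩ := h
  refine ⟨l.map f, by simpa using hl, ?_⟩
  have h1 : l.map (π' ∘ f) = l.map (⇑ψ ∘ π) := List.map_congr_left fun x _ => hc x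
  have h2 : (l.map (⇑ψ ∘ π)).prod = ψ (l.map π).prod := by
    rw [← List.map_map, ← ψ.map_list_prod]
  rw [List.map_map, h1, h2, ← ψ.map_mul, hp]

theorem invclosed_list (hinv : InvClosed π) (l : List X) :
    ∃ l' : List X, l'.length = l.length ∧ (l'.map π).prod = ((l.map π).prod)⁻¹ := by
  induction l with
  | nil => exact ⟨[], rfl, by simp⟩
  | cons x l ih =>
    obtain ⟨l', hlen, hprod⟩ := ih
    obtain ⟨x', hx'⟩ := hinv x
    exact ⟨l' ++ [x'], by simp [hlen], by simp [hprod, hx']⟩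

theorem wd_one_inv (hinv : InvClosed π) {K : ℕ} {n : G} (h : WDistLE π K 1 n) :
    WDistLE π K 1 n⁻¹ := by
  obtain ⟨l, hl, hp⟩ := h
  obtain ⟨l', hlen, hprod⟩ := invclosed_list hinv l
  exact ⟨l', hlen ▸ hl, by rw [one_mul] at hp ⊢; rw [hprod, hp]⟩

theorem wd_one_mul {K1 K2 : ℕ} {a b : G} (h1 : WDistLE π K1 1 a) (h2 : WDistLE π K2 1 b) :
    WDistLE π (K1 + K2) 1 (a * b) := by
  have h2' : WDistLE π K2 a (a * b) := by simpa using wd_left_mul a h2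
  exact wd_trans h1 h2'

theorem wd_symm (hinv : InvClosed π) {K : ℕ} {a b : G} (h : WDistLE π K a b) :
    WDistLE π K b a := by
  rw [wd_iff] at h ⊢
  obtain ⟨l, hl, hp⟩ := h
  obtain ⟨l', hlen, hprod⟩ := invclosed_list hinv l
  exact ⟨l', hlen ▸ hl, by rw [hprod, hp]; group⟩

theorem wd_one_map (ψ : G ≃* G) {M : ℕ} (hψ : ∀ x, WDistLE π M 1 (ψ (π x)))
    {L : ℕ} {n : G} (h : WDistLE π L 1 n) : WDistLE π (M * L) 1 (ψ n) := by
  obtain ⟨l, hl, hp⟩ := h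
  rw [one_mul] at hp
  subst hp
  suffices hs : ∃ l' : List X, l'.length ≤ M * l.length ∧ (l'.map π).prod = ψ (l.map π).prod by
    obtain ⟨l', h1, h2⟩ := hs
    exact ⟨l', h1.trans (Nat.mul_le_mul_left M hl), by rw [one_mul, h2]⟩
  clear hl
  induction l with
  | nil => exact ⟨[], by simp⟩
  | cons x l ih =>
    obtain ⟨l1, ha, hb⟩ := ih
    obtain ⟨l0, hc0, hd⟩ := hψ x
    rw [one_mul] at hd
    refine ⟨l0 ++ l1, by simp [Nat.mul_succ]; omega, ?_⟩
    rw [List.map_append, List.prod_append, hd, hb, List.map_cons, List.prod_cons, map_mul]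
end Aux2
section Aux3
open SemidirectProduct

variable {X Y N H : Type*} [Group N] [Group H] (φ : H →* MulAut N) (πN : X → N) (πH : Y → H)

/-- The generating map for the semidirect product. -/
def piG : X ⊕ Y → N ⋊[φ] H :=
  Sum.elim (fun x => (SemidirectProduct.inl (πN x) : N ⋊[φ] H))
    (fun y => SemidirectProduct.inr (πH y))

theorem evalW_inrmap (w : List Y) :
    evalW (piG φ πN πH) (w.map Sum.inr) = inr (evalW πH w) := by
  rw [evalW, evalW, List.map_map, MonoidHom.map_list_prod inr, List.map_map]
  rfl

theorem evalW_inlmap (v : List X) :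
    evalW (piG φ πN πH) (v.map Sum.inl) = inl (evalW πN v) := by
  rw [evalW, evalW, List.map_map, MonoidHom.map_list_prod inl, List.map_map]
  rfl

theorem evalP_inrmap (w : List Y) (t : ℕ) :
    evalP (piG φ πN πH) (w.map Sum.inr) t = inr (evalP πH w t) := by
  rw [evalP, evalP, ← List.map_take, ← evalW, ← evalW, evalW_inrmap]

theorem evalP_inlmap (v : List X) (t : ℕ) :
    evalP (piG φ πN πH) (v.map Sum.inl) t = inl (evalP πN v t) := by
  rw [evalP, evalP, ← List.map_take, ← evalW, ← evalW, evalW_inlmap]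

theorem wd_inr {K : ℕ} {a b : H} (h : WDistLE πH K a b) :
    WDistLE (piG φ πN πH) K (inr a) (inr b) :=
  wd_map (π' := piG φ πN πH) inr Sum.inr (fun _ => rfl) h

theorem wd_inl {K : ℕ} {a b : N} (h : WDistLE πN K a b) :
    WDistLE (piG φ πN πH) K (inl a) (inl b) :=
  wd_map (π' := piG φ πN πH) inl Sum.inl (fun _ => rfl) h

theorem sdp_key (c h : H) (n n' : N) :
    (inr c * inl n : N ⋊[φ] H) * (inr h * inl ((φ h).symm n⁻¹ * n')) =
      inr (c * h) * inl n' := by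
  ext <;> simp [mul_assoc]

theorem wd_conj (c : H) (y : Y) (n n' : N) {C : ℕ}
    (hT : WDistLE πN C 1 ((φ (πH y)).symm n⁻¹ * n')) :
    WDistLE (piG φ πN πH) (C + 1) (inr c * inl n) (inr (c * πH y) * inl n') := by
  obtain ⟨l, hl, hp⟩ := hT
  rw [one_mul] at hp
  refine ⟨Sum.inr y :: l.map Sum.inl, by simpa using hl, ?_⟩
  have : ((Sum.inr y :: l.map Sum.inl).map (piG φ πN πH)).prod =
      inr (πH y) * inl ((l.map πN).prod) := by
    rw [List.map_cons, List.prod_cons, ← evalW, evalW_inlmap]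
    rfl
  rw [this, hp]
  exact sdp_key φ c (πH y) n n'

theorem boundary_val [Inhabited X] (f : N →* N) (ws : List (List X)) (v' : List X)
    (hlen : ws.length = v'.length)
    (hblock : ∀ i, i < v'.length → evalW πN (ws.getD i []) = f (πN (v'.getD i default)))
    {j : ℕ} (hj : j ≤ v'.length) :
    evalW πN ((ws.take j).flatten) = f (evalP πN v' j) := by
  induction j with
  | zero => simp [evalW, evalP]
  | succ j ih =>
    have hj' : j < v'.length := hj
    have hjw : j < ws.length := by omega
    rw [List.take_succ, List.getElem?_eq_getElem hjw, List.flatten_append, evalW_append,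
      ih (le_of_lt hj'), evalP_succ _ _ hj']
    have : evalW πN ((some ws[j]).toList.flatten) = f (πN v'[j]) := by
      have h1 := hblock j hj'
      rw [List.getD_eq_getElem _ _ hjw] at h1
      rw [List.getD_eq_getElem _ _ hj'] at h1
      simpa [evalW] using h1
    rw [this, map_mul]

theorem flatten_take_prefix (ws : List (List X)) (j : ℕ) :
    ws.flatten.take ((ws.take j).flatten.length) = (ws.take j).flatten := by
  have h1 : ws.flatten = (ws.take j).flatten ++ (ws.drop j).flatten := by
    rw [← List.flatten_append, List.take_append_drop]
  rw [h1, List.take_left]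

theorem B_succ (ws : List (List X)) {j : ℕ} (hj : j < ws.length) :
    (ws.take (j+1)).flatten.length = (ws.take j).flatten.length + (ws.getD j []).length := by
  rw [List.take_succ, List.getElem?_eq_getElem hj, List.flatten_append]
  simp [List.getD, List.getElem?_eq_getElem hj]

theorem B_mono (ws : List (List X)) : Monotone (fun j => (ws.take j).flatten.length) := by
  intro a b hab
  simp only
  have h2 : ws.take b = ws.take a ++ ((ws.drop a).take (b - a)) := by
    rw [← List.take_add]; congr 1; omega
  rw [h2, List.flatten_append, List.length_append]
  omega
end Aux3
section Aux4
open SemidirectProduct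
variable {X G : Type*} [Group G] {π : X → G}

theorem wd_segment {M' : ℕ} (w : List X) {q p : ℕ} (h : q ≤ p) (hM : p - q ≤ M') :
    WDistLE π M' (evalP π w q) (evalP π w p) :=
  ⟨(w.drop q).take (p - q), by rw [List.length_take]; omega, evalP_segment w h⟩

theorem wd_one_of {K : ℕ} {a b : G} (h : WDistLE π K a b) : WDistLE π K 1 (a⁻¹ * b) := by
  rw [wd_iff] at h
  obtain ⟨l, hl, hp⟩ := h
  exact ⟨l, hl, by rw [one_mul, hp]⟩

variable {Y N H : Type*} [Group N] [Group H] (φ : H →* MulAut N) (πN : X → N) (πH : Y → H)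

theorem sdp_decomp (g : N ⋊[φ] H) : inr g.right * inl ((φ g.right).symm g.left) = g := by
  ext <;> simp

theorem sdp_pair_eq {a a' : H} {n n' : N}
    (h : (inr a * inl n : N ⋊[φ] H) = inr a' * inl n') : a = a' ∧ n = n' := by
  have hr := congrArg SemidirectProduct.right h
  simp only [mul_right, right_inr, right_inl, mul_one] at hr
  have hl := congrArg SemidirectProduct.left h
  simp only [mul_left, left_inr, left_inl, one_mul] at hl
  subst hr
  exact ⟨rfl, (φ a).injective hl⟩

theorem sdp_shift (n : N) (h : H) :
    (inl n : N ⋊[φ] H) * inr h = inr h * inl ((φ h).symm n) := by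
  have h2 := inl_aut_inv (φ := φ) h n
  calc (inl n : N ⋊[φ] H) * inr h = (inr h * inr h⁻¹) * inl n * inr h := by
        rw [← map_mul, mul_inv_cancel, map_one, one_mul]
    _ = inr h * (inr h⁻¹ * inl n * inr h) := by group
    _ = inr h * inl ((φ h)⁻¹ n) := by rw [h2]
    _ = inr h * inl ((φ h).symm n) := rfl

theorem evalP_mixed_low (w : List Y) (v : List X) {t : ℕ} (ht : t ≤ w.length) :
    evalP (piG φ πN πH) (w.map Sum.inr ++ v.map Sum.inl) t = inr (evalP πH w t) := by
  rw [evalP_append_left _ (by simpa using ht), evalP_inrmap]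

theorem evalP_mixed_high (w : List Y) (v : List X) (s : ℕ) :
    evalP (piG φ πN πH) (w.map Sum.inr ++ v.map Sum.inl) (w.length + s) =
      inr (evalW πH w) * inl (evalP πN v s) := by
  have h1 : w.length = (w.map Sum.inr : List (X ⊕ Y)).length := by simp
  rw [h1, evalP_append_right, evalW_inrmap, evalP_inlmap]

theorem evalW_mixed (w : List Y) (v : List X) :
    evalW (piG φ πN πH) (w.map Sum.inr ++ v.map Sum.inl) =
      inr (evalW πH w) * inl (evalW πN v) := by
  rw [evalW_append, evalW_inrmap, evalW_inlmap]

end Aux4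
section Aux5
open SemidirectProduct
variable {X Y N H : Type*} [Group N] [Group H] (φ : H →* MulAut N) (πN : X → N) (πH : Y → H)

theorem assemble {K'' : ℕ} (w w' : List Y) (v v' : List X)
    (hH : ℕ → ℕ) (hHmono : Monotone hH) (hH0 : hH 0 = 0) (hHlen : hH w.length = w'.length)
    (hHwd : ∀ t, WDistLE πH K'' (evalP πH w t) (evalP πH w' (hH t)))
    (gN : ℕ → ℕ) (gmono : Monotone gN) (g0 : gN 0 = 0) (glen : gN v.length = v'.length)
    (gle : ∀ s, gN s ≤ v'.length)
    (hcore : ∀ s, s ≤ v.length → WDistLE (piG φ πN πH) K''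
      (inr (evalW πH w) * inl (evalP πN v s))
      (inr (evalW πH w') * inl (evalP πN v' (gN s))))
    (htail : WDistLE (piG φ πN πH) K'' (evalW (piG φ πN πH) (w.map Sum.inr ++ v.map Sum.inl))
      (evalW (piG φ πN πH) (w'.map Sum.inr ++ v'.map Sum.inl))) :
    AsyncFT (piG φ πN πH) K'' (w.map Sum.inr ++ v.map Sum.inl)
      (w'.map Sum.inr ++ v'.map Sum.inl) := by
  have hw'0 : w.length = 0 → w'.length = 0 := fun h => by rw [← hHlen, h, hH0]
  have hv'0 : v.length = 0 → v'.length = 0 := fun h => by rw [← glen, h, g0]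
  set F : ℕ → ℕ := fun t => if t = 0 then 0 else if w.length + v.length ≤ t then
    w'.length + v'.length else if t ≤ w.length then hH t else w'.length + gN (t - w.length)
    with hF
  have hHle : ∀ t, t ≤ w.length → hH t ≤ w'.length := fun t ht => hHlen ▸ hHmono ht
  have hFmono : Monotone F := by
    apply monotone_nat_of_le_succ
    intro t
    by_cases h0 : t = 0
    · subst h0; simp only [hF, if_pos rfl]; exact Nat.zero_le _
    simp only [hF, if_neg h0, if_neg (Nat.succ_ne_zero t)]
    by_cases hbig : w.length + v.length ≤ t
    · rw [if_pos hbig, if_pos (by omega)]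
    rw [if_neg hbig]
    by_cases hlow : t ≤ w.length
    · rw [if_pos hlow]
      by_cases hb2 : w.length + v.length ≤ t + 1
      · rw [if_pos hb2]
        have := hHle t hlow
        omega
      rw [if_neg hb2]
      by_cases hlow2 : t + 1 ≤ w.length
      · rw [if_pos hlow2]; exact hHmono (Nat.le_succ t)
      · rw [if_neg hlow2]
        have h1 : t = w.length := by omega
        have := hHle t hlow
        omega
    · rw [if_neg hlow]
      by_cases hb2 : w.length + v.length ≤ t + 1
      · rw [if_pos hb2]
        have := gle (t - w.length)
        omega
      rw [if_neg hb2, if_neg (by omega)]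
      have := gmono (show t - w.length ≤ t + 1 - w.length by omega)
      omega
  refine ⟨F, hFmono, by simp [hF], ?_, ?_⟩
  · simp only [List.length_append, List.length_map, hF]
    by_cases h0 : w.length + v.length = 0
    · rw [if_pos h0]
      have := hw'0 (by omega)
      have := hv'0 (by omega)
      omega
    · rw [if_neg h0, if_pos le_rfl]
  · intro t
    by_cases h0 : t = 0
    · subst h0
      simp only [hF, if_pos rfl]
      exact wd_refl _ _
    simp only [hF, if_neg h0]
    by_cases hbig : w.length + v.length ≤ t
    · rw [if_pos hbig]
      rw [evalP_of_le (by simpa using hbig)]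
      rw [show w'.length + v'.length = (w'.map (Sum.inr : Y → X ⊕ Y) ++ v'.map Sum.inl).length
        by simp]
      rw [evalP_of_le le_rfl]
      exact htail
    rw [if_neg hbig]
    by_cases hlow : t ≤ w.length
    · rw [if_pos hlow]
      rw [evalP_mixed_low φ πN πH w v hlow, evalP_mixed_low φ πN πH w' v' (hHle t hlow)]
      exact wd_inr φ πN πH (hHwd t)
    · rw [if_neg hlow]
      obtain ⟨s, rfl⟩ : ∃ s, t = w.length + s := ⟨t - w.length, by omega⟩
      rw [Nat.add_sub_cancel_left, evalP_mixed_high, evalP_mixed_high]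
      exact hcore s (by omega)
end Aux5
section Aux6
open SemidirectProduct
variable {X Y N H : Type*} [Group N] [Group H] [Inhabited X]
  (φ : H →* MulAut N) (πN : X → N) (πH : Y → H)

theorem coreB (hinvN : InvClosed πN) (hinvH : InvClosed πH) (LN : Set (List X)) (K K' M : ℕ)
    (r : Y → X → List X) (hrmem : ∀ y x, r y x ∈ LN)
    (hrval : ∀ y x, evalW πN (r y x) = φ (πH y) (πN x))
    (hrlen : ∀ y x, (r y x).length ≤ M)
    (hLNft : ∀ v ∈ LN, ∀ w ∈ LN, CombRel πN v w → AsyncFT πN K v w)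
    (hstar : ∀ (y : Y), ∀ v ∈ LN, ∀ v' ∈ LN,
      evalW πN v' = φ (πH y) (evalW πN v) →
        ∀ u : List X, IsImageUnder πN πH φ LN y v u → AsyncFT πN K' v' u)
    (v v' : List X) (hv : v ∈ LN) (hv' : v' ∈ LN) (y : Y)
    (hrel : evalW πN v = φ (πH y) (evalW πN v')) :
    ∃ gN : ℕ → ℕ, Monotone gN ∧ gN 0 = 0 ∧ gN v.length = v'.length ∧
      (∀ s, gN s ≤ v'.length) ∧
      ∀ s, s ≤ v.length → ∀ c : H, WDistLE (piG φ πN πH) (M * (K' + M) + 1)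
        (inr c * inl (evalP πN v s)) (inr (c * πH y) * inl (evalP πN v' (gN s))) := by
  classical
  set ws : List (List X) := v'.map (r y) with hws
  set uim : List X := ws.flatten with huim
  have hws_len : ws.length = v'.length := by simp [hws]
  have hblock : ∀ i, i < v'.length → ws.getD i [] = r y (v'.getD i default) := by
    intro i hi
    rw [List.getD_eq_getElem _ _ (by rw [hws_len]; exact hi), List.getD_eq_getElem _ _ hi]
    simp [hws]
  have him : IsImageUnder πN πH φ LN y v' uim := by
    refine ⟨ws, hws_len, rfl, fun i hi => ?_⟩
    rw [hblock i hi]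
    exact ⟨hrmem _ _, hrval _ _⟩
  obtain ⟨k2, k2mono, k20, k2len, k2wd⟩ := hstar y v' hv' v hv hrel uim him
  set B : ℕ → ℕ := fun j => ((ws.take j).flatten).length with hB
  set jf : ℕ → ℕ := fun p => Nat.findGreatest (fun j => B j ≤ p) v'.length with hjf
  have hjf_le : ∀ p, jf p ≤ v'.length := fun p => Nat.findGreatest_le _
  have hjf_spec : ∀ p, B (jf p) ≤ p := by
    intro p
    rw [hjf]
    exact Nat.findGreatest_spec (P := fun j => B j ≤ p) (Nat.zero_le _) (by simp [hB])
  have hjf_mono : ∀ {p q}, p ≤ q → jf p ≤ jf q := fun {p q} h =>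
    Nat.le_findGreatest (hjf_le p) ((hjf_spec p).trans h)
  have hB_top : B v'.length = uim.length := by
    simp only [hB, huim]
    rw [List.take_of_length_le (le_of_eq hws_len)]
  have hjf_top : jf uim.length = v'.length :=
    le_antisymm (hjf_le _) (Nat.le_findGreatest le_rfl (le_of_eq hB_top))
  set gN : ℕ → ℕ := fun s => if s = 0 then 0 else jf (k2 (min s v.length)) with hgN
  have gmono : Monotone gN := by
    intro a b hab
    simp only [hgN]
    by_cases ha : a = 0
    · rw [if_pos ha]; exact Nat.zero_le _
    · rw [if_neg ha, if_neg (by omega)]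
      exact hjf_mono (k2mono (by omega))
  have gle : ∀ s, gN s ≤ v'.length := by
    intro s
    simp only [hgN]
    split
    · exact Nat.zero_le _
    · exact hjf_le _
  have glen : gN v.length = v'.length := by
    by_cases hv0 : v.length = 0
    · have hveq : v = [] := List.length_eq_zero_iff.mp hv0
      have hv'1 : evalW πN v' = 1 := by
        have h1 : evalW πN v = 1 := by rw [hveq]; simp [evalW]
        rw [h1] at hrel
        have := (φ (πH y)).injective (by rw [← hrel, map_one] : φ (πH y) (evalW πN v') = φ (πH y) 1)
        exact this
      have hcr : CombRel πN v v' := Or.inl (by rw [hv'1, hveq]; simp [evalW])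
      obtain ⟨k, _, k0, klen, _⟩ := hLNft v hv v' hv' hcr
      rw [hv0] at klen
      have hv'0 : v'.length = 0 := by omega
      simp [hgN, hv0, hv'0]
    · simp only [hgN, if_neg hv0, min_self, k2len, hjf_top]
  refine ⟨gN, gmono, by simp [hgN], glen, gle, ?_⟩
  intro s hs c
  by_cases hs0 : s = 0
  · subst hs0
    have h1 : (φ (πH y)).symm (evalP πN v 0)⁻¹ * evalP πN v' (gN 0) = 1 := by
      simp [evalP, hgN]
    have h2 := wd_conj φ πN πH c y (evalP πN v 0) (evalP πN v' (gN 0)) (C := M * (K' + M))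
      (by rw [h1]; exact wd_refl _ _)
    exact h2
  · have hsmin : min s v.length = s := min_eq_left hs
    set p := k2 s with hp
    set j := jf p with hj
    have hjv : j ≤ v'.length := hjf_le p
    have hple : p ≤ uim.length := by rw [← k2len]; exact k2mono hs
    have hBj : B j ≤ p := hjf_spec p
    have hdiff : p - B j ≤ M := by
      rcases lt_or_eq_of_le hjv with hlt | heq
      · have hng : ¬ B (j + 1) ≤ p := by
          have h6 : Nat.findGreatest (fun j0 => B j0 ≤ p) v'.length < j + 1 := by
            rw [hj, hjf]
            exact Nat.lt_succ_self _
          exact Nat.findGreatest_is_greatest (P := fun j0 => B j0 ≤ p) h6 hlt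
        have hstep : B (j + 1) = B j + (ws.getD j []).length :=
          B_succ ws (by rw [hws_len]; exact hlt)
        have hlenj : (ws.getD j []).length ≤ M := by rw [hblock j hlt]; exact hrlen y _
        omega
      · rw [heq] at hBj ⊢
        rw [hB_top] at hBj ⊢
        omega
    have wd1 : WDistLE πN K' (evalP πN v s) (evalP πN uim p) := k2wd s
    have wd2 : WDistLE πN M (evalP πN uim (B j)) (evalP πN uim p) := wd_segment uim hBj hdiff
    have hBval : evalP πN uim (B j) = φ (πH y) (evalP πN v' j) := by
      have h3 : evalP πN uim (B j) = evalW πN ((ws.take j).flatten) := by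
        rw [evalP, evalW, flatten_take_prefix]
      rw [h3]
      exact boundary_val πN ((φ (πH y)) : N →* N) ws v' hws_len
        (fun i hi => by rw [hblock i hi]; exact hrval y _) hjv
    have wdE : WDistLE πN K' 1 ((evalP πN v s)⁻¹ * evalP πN uim p) := wd_one_of wd1
    rw [hBval] at wd2
    have wdM1 : WDistLE πN M 1 ((φ (πH y) (evalP πN v' j))⁻¹ * evalP πN uim p) :=
      wd_one_of wd2
    have wdM2 : WDistLE πN M 1 ((evalP πN uim p)⁻¹ * φ (πH y) (evalP πN v' j)) := by
      have h4 := wd_one_inv hinvN wdM1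
      simpa [mul_inv_rev] using h4
    have wdT0 : WDistLE πN (K' + M) 1 ((evalP πN v s)⁻¹ * φ (πH y) (evalP πN v' j)) := by
      have h5 := wd_one_mul wdE wdM2
      rw [show ((evalP πN v s)⁻¹ * evalP πN uim p) * ((evalP πN uim p)⁻¹ *
        φ (πH y) (evalP πN v' j)) = (evalP πN v s)⁻¹ * φ (πH y) (evalP πN v' j) by group] at h5
      exact h5
    have hψx : ∀ x, WDistLE πN M 1 ((φ (πH y)).symm (πN x)) := by
      intro x
      obtain ⟨y', hy'⟩ := hinvH y
      refine ⟨r y' x, hrlen y' x, ?_⟩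
      rw [one_mul]
      have : (List.map πN (r y' x)).prod = evalW πN (r y' x) := rfl
      rw [this, hrval y' x, hy', map_inv]
      rfl
    have wdT1 := wd_one_map (φ (πH y)).symm hψx wdT0
    rw [show (φ (πH y)).symm ((evalP πN v s)⁻¹ * φ (πH y) (evalP πN v' j)) =
      (φ (πH y)).symm (evalP πN v s)⁻¹ * evalP πN v' j by
        rw [map_mul, MulEquiv.symm_apply_apply, map_inv]] at wdT1
    have hfin := wd_conj φ πN πH c y (evalP πN v s) (evalP πN v' j) wdT1
    have hgj : gN s = j := by
      simp only [hgN, if_neg hs0, hsmin]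
      rfl
    rw [hgj]
    exact hfin
end Aux6

open SemidirectProduct

/-- (Bridson's lemma) for a split extension `G = N ⋊ H` with asynchronous
combings `L_N`, `L_H` of constant `K`, if every `L_N`-representative of `n^y`
asynchronously `K'`-fellow travels with every image under `y` of every
`L_N`-representative of `n`, then `L_H L_N` is an asynchronous combing of `G`,
bijective if `L_N` and `L_H` are. -/
theorem stmt15 {X Y N H : Type*} [Group N] [Group H] [Fintype X] [Fintype Y] [Inhabited X]
    (φ : H →* MulAut N) (πN : X → N) (πH : Y → H)
    (hinvN : InvClosed πN) (hinvH : InvClosed πH)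
    (LN : Set (List X)) (LH : Set (List Y)) (K K' : ℕ)
    (hLN : IsAsyncCombing πN LN K) (hLH : IsAsyncCombing πH LH K)
    (hstar : ∀ (y : Y), ∀ v ∈ LN, ∀ v' ∈ LN,
      evalW πN v' = φ (πH y) (evalW πN v) →
        ∀ u : List X, IsImageUnder πN πH φ LN y v u → AsyncFT πN K' v' u) :
    ∃ K'' : ℕ,
      IsAsyncCombing
        (Sum.elim (fun x => (SemidirectProduct.inl (πN x) : N ⋊[φ] H))
          (fun y => SemidirectProduct.inr (πH y)))
        {u : List (X ⊕ Y) | ∃ w ∈ LH, ∃ v ∈ LN, u = w.map Sum.inr ++ v.map Sum.inl} K'' ∧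
      (IsBijectiveLang πN LN → IsBijectiveLang πH LH →
        IsBijectiveLang
          (Sum.elim (fun x => (SemidirectProduct.inl (πN x) : N ⋊[φ] H))
            (fun y => SemidirectProduct.inr (πH y)))
          {u : List (X ⊕ Y) | ∃ w ∈ LH, ∃ v ∈ LN, u = w.map Sum.inr ++ v.map Sum.inl}) := by
  classical
  obtain ⟨hLNlang, hLNft⟩ := hLN
  obtain ⟨hLHlang, hLHft⟩ := hLH
  choose r hrmem hrval using fun (y : Y) (x : X) => hLNlang (φ (πH y) (πN x))
  set M : ℕ := Finset.univ.sup (fun p : Y × X => (r p.1 p.2).length) with hMdef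
  have hrlen : ∀ y x, (r y x).length ≤ M :=
    fun y x => Finset.le_sup (f := fun p : Y × X => (r p.1 p.2).length) (Finset.mem_univ (y, x))
  refine ⟨K + (M * (K' + M) + 1), ⟨?_, ?_⟩, ?_⟩
  · -- language
    intro g
    obtain ⟨w, hw, hwe⟩ := hLHlang g.right
    obtain ⟨v, hv, hve⟩ := hLNlang ((φ g.right).symm g.left)
    refine ⟨w.map Sum.inr ++ v.map Sum.inl, ⟨w, hw, v, hv, rfl⟩, ?_⟩
    show evalW (piG φ πN πH) _ = g
    rw [evalW_mixed, hwe, hve, sdp_decomp]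
  · -- combing
    intro u hu u' hu' hrel
    obtain ⟨w, hw, v, hv, hueq⟩ := hu
    obtain ⟨w', hw', v', hv', hueq'⟩ := hu'
    subst hueq hueq'
    show AsyncFT (piG φ πN πH) _ _ _
    replace hrel : CombRel (piG φ πN πH) (w.map Sum.inr ++ v.map Sum.inl)
      (w'.map Sum.inr ++ v'.map Sum.inl) := hrel
    have htail : WDistLE (piG φ πN πH) (K + (M * (K' + M) + 1))
        (evalW (piG φ πN πH) (w.map Sum.inr ++ v.map Sum.inl))
        (evalW (piG φ πN πH) (w'.map Sum.inr ++ v'.map Sum.inl)) := by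
      rcases hrel with he | ⟨z, hz⟩
      · exact ⟨[], by simp, by rw [List.map_nil, List.prod_nil, mul_one, he]⟩
      · exact ⟨[z], by simp; omega, by rw [hz]; simp⟩
    have hcomp : CombRel πH w w' ∧
        ((evalW πH w' = evalW πH w ∧ CombRel πN v v') ∨
         (∃ y : Y, evalW πH w' = evalW πH w * πH y ∧
            evalW πN v = φ (πH y) (evalW πN v'))) := by
      rcases hrel with he | ⟨z, hz⟩
      · rw [evalW_mixed, evalW_mixed] at he
        obtain ⟨h1, h2⟩ := sdp_pair_eq (φ := φ) he
        exact ⟨Or.inl h1, Or.inl ⟨h1, Or.inl h2⟩⟩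
      · cases z with
        | inl x =>
          rw [evalW_mixed, evalW_mixed,
            show piG φ πN πH (Sum.inl x) = inl (πN x) from rfl] at hz
          have hz' : (inr (evalW πH w') * inl (evalW πN v') : N ⋊[φ] H) =
              inr (evalW πH w) * inl (evalW πN v * πN x) := by
            rw [hz, mul_assoc, ← map_mul inl]
          obtain ⟨h1, h2⟩ := sdp_pair_eq (φ := φ) hz'
          exact ⟨Or.inl h1, Or.inl ⟨h1, Or.inr ⟨x, h2⟩⟩⟩
        | inr y =>
          rw [evalW_mixed, evalW_mixed] at hz
          have hz' : (inr (evalW πH w') * inl (evalW πN v') : N ⋊[φ] H) =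
              inr (evalW πH w * πH y) * inl ((φ (πH y)).symm (evalW πN v)) := by
            rw [hz, show piG φ πN πH (Sum.inr y) = inr (πH y) from rfl,
              mul_assoc, sdp_shift φ, ← mul_assoc, ← map_mul inr]
          obtain ⟨h1, h2⟩ := sdp_pair_eq (φ := φ) hz'
          refine ⟨Or.inr ⟨y, h1⟩, Or.inr ⟨y, h1, ?_⟩⟩
          rw [h2, MulEquiv.apply_symm_apply]
    obtain ⟨hcrH, hcase⟩ := hcomp
    obtain ⟨hHf, hHmono, hH0, hHlen, hHwd⟩ := hLHft w hw w' hw' hcrH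
    have hN : ∃ gN : ℕ → ℕ, Monotone gN ∧ gN 0 = 0 ∧ gN v.length = v'.length ∧
        (∀ s, gN s ≤ v'.length) ∧
        ∀ s, s ≤ v.length → WDistLE (piG φ πN πH) (K + (M * (K' + M) + 1))
          (inr (evalW πH w) * inl (evalP πN v s))
          (inr (evalW πH w') * inl (evalP πN v' (gN s))) := by
      rcases hcase with ⟨hweq, hcrN⟩ | ⟨y, hweq, hrelN⟩
      · obtain ⟨kN, kmono, k0, klen, kwd⟩ := hLNft v hv v' hv' hcrN
        refine ⟨fun s => kN (min s v.length), fun a b hab => kmono (by omega), by simp [k0],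
          by simp [klen], fun s => by rw [← klen]; exact kmono (min_le_right _ _), ?_⟩
        intro s hs
        rw [hweq]
        simp only [min_eq_left hs]
        exact wd_mono (by omega)
          (wd_left_mul (inr (evalW πH w) : N ⋊[φ] H) (wd_inl φ πN πH (kwd s)))
      · obtain ⟨gN, gmono, g0, glen, gle, gcore⟩ := coreB φ πN πH hinvN hinvH LN K K' M r
          hrmem hrval hrlen hLNft hstar v v' hv hv' y hrelN
        refine ⟨gN, gmono, g0, glen, gle, fun s hs => ?_⟩
        rw [hweq]
        exact wd_mono (by omega) (gcore s hs (evalW πH w))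
    obtain ⟨gN, gmono, g0, glen, gle, gcore⟩ := hN
    exact assemble φ πN πH w w' v v' hHf hHmono hH0 hHlen
      (fun t => wd_mono (by omega) (hHwd t)) gN gmono g0 glen gle gcore htail
  · -- bijectivity
    intro hbN hbH g
    obtain ⟨w, ⟨hw, hwe⟩, hwuniq⟩ := hbH g.right
    obtain ⟨v, ⟨hv, hve⟩, hvuniq⟩ := hbN ((φ g.right).symm g.left)
    refine ⟨w.map Sum.inr ++ v.map Sum.inl, ⟨⟨w, hw, v, hv, rfl⟩, ?_⟩, ?_⟩
    · show evalW (piG φ πN πH) _ = g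
      rw [evalW_mixed, hwe, hve, sdp_decomp]
    · rintro u ⟨hu, heval⟩
      obtain ⟨w2, hw2, v2, hv2, hueq⟩ := hu
      subst hueq
      have heval' : evalW (piG φ πN πH) (w2.map Sum.inr ++ v2.map Sum.inl) = g := heval
      rw [evalW_mixed, ← sdp_decomp φ g] at heval'
      obtain ⟨h1, h2⟩ := sdp_pair_eq (φ := φ) heval'
      rw [hwuniq w2 ⟨hw2, h1⟩, hvuniq v2 ⟨hv2, h2⟩]
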